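/- Under the standing assumptions, ∫_{{|k| ≥ ν}} W(k) |k|^{2/3} ‖ω_k‖²_{L²_y([-1,1])} dk ≲ ν^{-1/3}·𝓔^{1/2}·𝓓₁^{1/4}·𝓓₃^{1/4}. (Second estimate of Lemma 3.2.) -/

import Mathlib

open MeasureTheory Set Filter Topology
open scoped ENNReal

noncomputable section

/-- `L²` norm over `y ∈ [-1,1]`. -/
def L2y (f : ℝ → ℂ) : ℝ := (∫ y in Set.Icc (-1 : ℝ) 1, ‖f y‖ ^ 2) ^ ((1 : ℝ) / 2)

/-- `L^∞` norm over `y ∈ [-1,1]`. -/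
def Linfy (f : ℝ → ℂ) : ℝ := ⨆ y : Set.Icc (-1 : ℝ) 1, ‖f (y : ℝ)‖

/-- `L²([-1,1])` inner product `⟨f,g⟩ = ∫ conj (f y) * g y dy`. -/
def ipy (f g : ℝ → ℂ) : ℂ :=
  ∫ y in Set.Icc (-1 : ℝ) 1, (starRingEnd ℂ) (f y) * g y

/-- The rate `λ_k`. -/
def lamf (ν k : ℝ) : ℝ :=
  if ν ≤ |k| then ν ^ ((1 : ℝ) / 3) * |k| ^ ((2 : ℝ) / 3) else ν

/-- The weight `α(k)`. -/
def alphf (ν k : ℝ) : ℝ :=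
  if ν ≤ |k| then ν ^ ((2 : ℝ) / 3) * |k| ^ (-((2 : ℝ) / 3)) else 1

/-- The weight `β(k)`. -/
def betaf (ν k : ℝ) : ℝ :=
  if ν ≤ |k| then ν ^ ((1 : ℝ) / 3) * |k| ^ (-((4 : ℝ) / 3)) else 0

/-- The frequency weight `W(k) = e^{2cλ_k t}⟨k⟩^{2m}⟨k⁻¹⟩^{2ε}`. -/
def Wf (ν m ε c t k : ℝ) : ℝ :=
  Real.exp (2 * c * lamf ν k * t) * (1 + k ^ 2) ^ m * (1 + k⁻¹ ^ 2) ^ ε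

/-- `‖∇_k f‖²_{L²} = k²‖f‖²_{L²} + ‖∂_y f‖²_{L²}` (with `df = ∂_y f`). -/
def gradSq (k : ℝ) (f df : ℝ → ℂ) : ℝ :=
  k ^ 2 * (L2y f) ^ 2 + (L2y df) ^ 2

/-- The weighted energy `𝓔`. -/
def EEn (ν m ε c t : ℝ) (ω dω : ℝ → ℝ → ℂ) : ℝ≥0∞ :=
  ∫⁻ k : ℝ, ENNReal.ofReal
    (Wf ν m ε c t k * ((L2y (ω k)) ^ 2 + alphf ν k * (L2y (dω k)) ^ 2))

/-- The dissipation functional `𝓓₁`. -/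
def D1n (ν m ε c t : ℝ) (ω dω : ℝ → ℝ → ℂ) : ℝ≥0∞ :=
  ∫⁻ k : ℝ, ENNReal.ofReal (Wf ν m ε c t k * (ν * gradSq k (ω k) (dω k)))

/-- The dissipation functional `𝓓₂`. -/
def D2n (ν m ε c t : ℝ) (dω d2ω : ℝ → ℝ → ℂ) : ℝ≥0∞ :=
  ∫⁻ k : ℝ, ENNReal.ofReal (Wf ν m ε c t k * (ν * alphf ν k * gradSq k (dω k) (d2ω k)))

/-- The dissipation functional `𝓓₃`. -/
def D3n (ν m ε c t : ℝ) (ω : ℝ → ℝ → ℂ) : ℝ≥0∞ :=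
  ∫⁻ k : ℝ, ENNReal.ofReal (Wf ν m ε c t k * (lamf ν k * (L2y (ω k)) ^ 2))

/-- The dissipation functional `𝓓₄`. -/
def D4n (ν m ε c t : ℝ) (φ dφ : ℝ → ℝ → ℂ) : ℝ≥0∞ :=
  ∫⁻ k : ℝ, ENNReal.ofReal (Wf ν m ε c t k * (k ^ 2 * gradSq k (φ k) (dφ k)))

/-- The dissipation functional `𝓓₅`. -/
def D5n (ν m ε c t : ℝ) (dφ d2φ : ℝ → ℝ → ℂ) : ℝ≥0∞ :=
  ∫⁻ k : ℝ, ENNReal.ofReal (Wf ν m ε c t k * (alphf ν k * k ^ 2 * gradSq k (dφ k) (d2φ k)))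

/-! ### Auxiliary lemmas -/

lemma measurable_L2y' {ω : ℝ → ℝ → ℂ} (h : Measurable (Function.uncurry ω)) :
    Measurable fun k => L2y (ω k) := by
  have h1 : StronglyMeasurable fun p : ℝ × ℝ => ‖Function.uncurry ω p‖ ^ 2 :=
    (h.norm.pow_const 2).stronglyMeasurable
  have h2 : StronglyMeasurable fun k : ℝ =>
      ∫ y, ‖Function.uncurry ω (k, y)‖ ^ 2 ∂(volume.restrict (Set.Icc (-1 : ℝ) 1)) :=
    h1.integral_prod_right'
  unfold L2y
  exact h2.measurable.pow measurable_const

lemma measurableSet_nuabs (ν : ℝ) : MeasurableSet {k : ℝ | ν ≤ |k|} :=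
  (isClosed_le continuous_const continuous_abs).measurableSet

lemma measurable_lamf' (ν : ℝ) : Measurable (lamf ν) := by
  unfold lamf
  exact Measurable.ite (measurableSet_nuabs ν)
    (measurable_const.mul (continuous_abs.measurable.pow measurable_const))
    measurable_const

lemma measurable_alphf' (ν : ℝ) : Measurable (alphf ν) := by
  unfold alphf
  exact Measurable.ite (measurableSet_nuabs ν)
    (measurable_const.mul (continuous_abs.measurable.pow measurable_const))
    measurable_const

lemma measurable_Wf' (ν m ε c t : ℝ) : Measurable (Wf ν m ε c t) := by
  unfold Wf
  exact ((((measurable_const.mul (measurable_lamf' ν)).mul measurable_const).exp).mul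
    ((measurable_const.add (measurable_id.pow_const 2)).pow measurable_const)).mul
    ((measurable_const.add (measurable_inv.pow_const 2)).pow measurable_const)

lemma alphf_nonneg {ν : ℝ} (hν : 0 ≤ ν) (k : ℝ) : 0 ≤ alphf ν k := by
  unfold alphf
  split
  · exact mul_nonneg (Real.rpow_nonneg hν _) (Real.rpow_nonneg (abs_nonneg k) _)
  · exact zero_le_one

lemma Wf_nonneg (ν m ε c t k : ℝ) : 0 ≤ Wf ν m ε c t k := by
  unfold Wf; positivity

/-- Pure algebra core of the pointwise estimate. -/
lemma alg_key {W L Ld Dg ν b a3 r k2 al : ℝ} (hW : 0 ≤ W) (hal : 0 ≤ al)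
    (hν : 0 ≤ ν) (hb : 0 ≤ b) (ha3 : 0 ≤ a3) (hk2 : 0 ≤ k2)
    (hDg : k2 * L ^ 2 ≤ Dg) (eν : r ^ 4 * ν * a3 = 1) (ek : b ^ 4 = k2 * b) :
    (W * (b * L ^ 2)) ^ 4 ≤
      r ^ 4 * ((W * (L ^ 2 + al * Ld ^ 2)) ^ 2 *
        ((W * (ν * Dg)) * (W * (a3 * b * L ^ 2)))) := by
  have h1 : (W * (b * L ^ 2)) ^ 4 =
      r ^ 4 * ((W * L ^ 2) ^ 2 * ((W * (ν * (k2 * L ^ 2))) * (W * (a3 * b * L ^ 2)))) := by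
    linear_combination (W ^ 4 * L ^ 8) * ek - (W ^ 4 * L ^ 8 * k2 * b) * eν
  rw [h1]
  have hX : (W * L ^ 2) ^ 2 ≤ (W * (L ^ 2 + al * Ld ^ 2)) ^ 2 := by
    apply pow_le_pow_left₀ (mul_nonneg hW (sq_nonneg L))
    exact mul_le_mul_of_nonneg_left
      (le_add_of_nonneg_right (mul_nonneg hal (sq_nonneg Ld))) hW
  have hY : W * (ν * (k2 * L ^ 2)) ≤ W * (ν * Dg) :=
    mul_le_mul_of_nonneg_left (mul_le_mul_of_nonneg_left hDg hν) hW
  have hZnn : (0 : ℝ) ≤ W * (a3 * b * L ^ 2) :=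
    mul_nonneg hW (mul_nonneg (mul_nonneg ha3 hb) (sq_nonneg L))
  have hYnn : (0 : ℝ) ≤ W * (ν * (k2 * L ^ 2)) :=
    mul_nonneg hW (mul_nonneg hν (mul_nonneg hk2 (sq_nonneg L)))
  have hr4 : (0 : ℝ) ≤ r ^ 4 := by positivity
  apply mul_le_mul_of_nonneg_left _ hr4
  exact mul_le_mul hX (mul_le_mul_of_nonneg_right hY hZnn)
    (mul_nonneg hYnn hZnn) (sq_nonneg _)

lemma lamf_nonneg {ν : ℝ} (hν : 0 ≤ ν) (k : ℝ) : 0 ≤ lamf ν k := by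
  unfold lamf
  split
  · exact mul_nonneg (Real.rpow_nonneg hν _) (Real.rpow_nonneg (abs_nonneg k) _)
  · exact hν

/-- ENNReal transfer of a fourth-power inequality. -/
lemma ofReal_bound {x a bb cc r : ℝ} (hx : 0 ≤ x) (ha : 0 ≤ a) (hbb : 0 ≤ bb)
    (hcc : 0 ≤ cc) (hr : 0 ≤ r) (h : x ^ 4 ≤ r ^ 4 * (a ^ 2 * (bb * cc))) :
    ENNReal.ofReal x ≤ ENNReal.ofReal r *
      ((ENNReal.ofReal a) ^ ((1 : ℝ) / 2) *
        ((ENNReal.ofReal bb) ^ ((1 : ℝ) / 4) * (ENNReal.ofReal cc) ^ ((1 : ℝ) / 4))) := by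
  rw [← ENNReal.rpow_le_rpow_iff (z := 4) (by norm_num : (0 : ℝ) < 4)]
  have h04 : (0 : ℝ) ≤ 4 := by norm_num
  rw [ENNReal.mul_rpow_of_nonneg _ _ h04, ENNReal.mul_rpow_of_nonneg _ _ h04,
    ENNReal.mul_rpow_of_nonneg _ _ h04, ← ENNReal.rpow_mul, ← ENNReal.rpow_mul,
    ← ENNReal.rpow_mul]
  norm_num
  rw [← ENNReal.ofReal_pow hx, ← ENNReal.ofReal_pow hr, ← ENNReal.ofReal_pow ha,
    ← ENNReal.ofReal_mul hbb, ← ENNReal.ofReal_mul (pow_nonneg ha 2),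
    ← ENNReal.ofReal_mul (pow_nonneg hr 4)]
  exact ENNReal.ofReal_le_ofReal h

/-- Three-function Hölder inequality with exponents 2, 4, 4. -/
lemma holder3 (A B C : ℝ → ℝ≥0∞) (hA : Measurable A) (hB : Measurable B)
    (hC : Measurable C) :
    ∫⁻ k, (A k) ^ ((1 : ℝ) / 2) * ((B k) ^ ((1 : ℝ) / 4) * (C k) ^ ((1 : ℝ) / 4)) ≤
      (∫⁻ k, A k) ^ ((1 : ℝ) / 2) *
        ((∫⁻ k, B k) ^ ((1 : ℝ) / 4) * (∫⁻ k, C k) ^ ((1 : ℝ) / 4)) := by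
  have h22 : Real.HolderConjugate 2 2 := Real.HolderConjugate.two_two
  have hBC : ∫⁻ k, (B k) ^ ((1 : ℝ) / 2) * (C k) ^ ((1 : ℝ) / 2) ≤
      (∫⁻ k, B k) ^ ((1 : ℝ) / 2) * (∫⁻ k, C k) ^ ((1 : ℝ) / 2) := by
    have H := ENNReal.lintegral_mul_le_Lp_mul_Lq volume h22
      ((hB.pow measurable_const).aemeasurable :
        AEMeasurable (fun k => (B k) ^ ((1 : ℝ) / 2)) volume)
      ((hC.pow measurable_const).aemeasurable :
        AEMeasurable (fun k => (C k) ^ ((1 : ℝ) / 2)) volume)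
    simpa only [Pi.mul_apply, ← ENNReal.rpow_mul, one_div, ENNReal.rpow_one,
      show (2 : ℝ)⁻¹ * 2 = 1 by norm_num] using H
  have H1 := ENNReal.lintegral_mul_le_Lp_mul_Lq volume h22
    ((hA.pow measurable_const).aemeasurable :
      AEMeasurable (fun k => (A k) ^ ((1 : ℝ) / 2)) volume)
    (((hB.pow measurable_const).mul (hC.pow measurable_const)).aemeasurable :
      AEMeasurable (fun k => (B k) ^ ((1 : ℝ) / 4) * (C k) ^ ((1 : ℝ) / 4)) volume)
  have e1 : ∀ k, ((A k) ^ ((1 : ℝ) / 2)) ^ (2 : ℝ) = A k := by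
    intro k
    rw [← ENNReal.rpow_mul]
    norm_num
  have e2 : ∀ k, ((B k) ^ ((1 : ℝ) / 4) * (C k) ^ ((1 : ℝ) / 4)) ^ (2 : ℝ) =
      (B k) ^ ((1 : ℝ) / 2) * (C k) ^ ((1 : ℝ) / 2) := by
    intro k
    rw [ENNReal.mul_rpow_of_nonneg _ _ (by norm_num : (0 : ℝ) ≤ 2),
      ← ENNReal.rpow_mul, ← ENNReal.rpow_mul]
    norm_num
  simp only [Pi.mul_apply, e1, e2] at H1
  calc ∫⁻ k, (A k) ^ ((1 : ℝ) / 2) * ((B k) ^ ((1 : ℝ) / 4) * (C k) ^ ((1 : ℝ) / 4))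
      ≤ (∫⁻ k, A k) ^ ((1 : ℝ) / 2) *
          (∫⁻ k, (B k) ^ ((1 : ℝ) / 2) * (C k) ^ ((1 : ℝ) / 2)) ^ ((1 : ℝ) / 2) := by
        simpa only [one_div] using H1
    _ ≤ (∫⁻ k, A k) ^ ((1 : ℝ) / 2) *
          ((∫⁻ k, B k) ^ ((1 : ℝ) / 2) * (∫⁻ k, C k) ^ ((1 : ℝ) / 2)) ^ ((1 : ℝ) / 2) :=
        mul_le_mul_right (ENNReal.rpow_le_rpow hBC (by norm_num)) _
    _ = (∫⁻ k, A k) ^ ((1 : ℝ) / 2) *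
          ((∫⁻ k, B k) ^ ((1 : ℝ) / 4) * (∫⁻ k, C k) ^ ((1 : ℝ) / 4)) := by
        rw [ENNReal.mul_rpow_of_nonneg _ _ (by norm_num : (0 : ℝ) ≤ 1 / 2),
          ← ENNReal.rpow_mul, ← ENNReal.rpow_mul]
        norm_num

theorem lemma32_second (m ε : ℝ) (hm : 1 < m) (hε : ε ∈ Set.Ioo (0 : ℝ) (1 / 12)) :
    ∃ C : ℝ, 0 < C ∧
      ∀ (ν c t : ℝ), ν ∈ Set.Ioo (0 : ℝ) 1 → 0 < c → 0 ≤ t →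
      ∀ (ω dω d2ω φ dφ d2φ : ℝ → ℝ → ℂ),
      Measurable (Function.uncurry ω) → Measurable (Function.uncurry dω) →
      Measurable (Function.uncurry d2ω) → Measurable (Function.uncurry φ) →
      Measurable (Function.uncurry dφ) → Measurable (Function.uncurry d2φ) →
      (∀ k : ℝ, ω k (-1) = 0 ∧ ω k 1 = 0) →
      (∀ k : ℝ, ∀ y ∈ Set.Icc (-1 : ℝ) 1,
        ω k y = ω k (-1) + ∫ s in (-1 : ℝ)..y, dω k s) →
      (∀ k : ℝ, ∀ y ∈ Set.Icc (-1 : ℝ) 1,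
        dω k y = dω k (-1) + ∫ s in (-1 : ℝ)..y, d2ω k s) →
      (∀ k : ℝ, MemLp (d2ω k) 2 (volume.restrict (Set.Icc (-1 : ℝ) 1))) →
      (∀ k : ℝ, k ≠ 0 → φ k (-1) = 0 ∧ φ k 1 = 0) →
      (∀ k : ℝ, k ≠ 0 → ∀ y ∈ Set.Icc (-1 : ℝ) 1,
        φ k y = φ k (-1) + ∫ s in (-1 : ℝ)..y, dφ k s) →
      (∀ k : ℝ, k ≠ 0 → ∀ y ∈ Set.Icc (-1 : ℝ) 1,
        dφ k y = dφ k (-1) + ∫ s in (-1 : ℝ)..y, d2φ k s) →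
      (∀ k : ℝ, k ≠ 0 → ∀ y ∈ Set.Icc (-1 : ℝ) 1,
        d2φ k y - (k : ℂ) ^ 2 * φ k y = ω k y) →
      EEn ν m ε c t ω dω ≠ ⊤ → D1n ν m ε c t ω dω ≠ ⊤ → D2n ν m ε c t dω d2ω ≠ ⊤ →
      D3n ν m ε c t ω ≠ ⊤ → D4n ν m ε c t φ dφ ≠ ⊤ → D5n ν m ε c t dφ d2φ ≠ ⊤ →
      ∫⁻ k in {k : ℝ | ν ≤ |k|},
          ENNReal.ofReal (Wf ν m ε c t k * (|k| ^ ((2 : ℝ) / 3) * (L2y (ω k)) ^ 2)) ≤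
        ENNReal.ofReal (C * ν ^ (-(1 : ℝ) / 3)) * (EEn ν m ε c t ω dω) ^ ((1 : ℝ) / 2) *
          (D1n ν m ε c t ω dω) ^ ((1 : ℝ) / 4) * (D3n ν m ε c t ω) ^ ((1 : ℝ) / 4) := by
  refine ⟨1, one_pos, ?_⟩
  rintro ν c t ⟨hν0, -⟩ hc ht ω dω d2ω φ dφ d2φ hmω hmdω - - - - - - - - - - - - - - - - - -
  have hmL : Measurable fun k => L2y (ω k) := measurable_L2y' hmω
  have hmLd : Measurable fun k => L2y (dω k) := measurable_L2y' hmdω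
  have hmW := measurable_Wf' ν m ε c t
  have hmA : Measurable fun k : ℝ => ENNReal.ofReal
      (Wf ν m ε c t k * ((L2y (ω k)) ^ 2 + alphf ν k * (L2y (dω k)) ^ 2)) :=
    (hmW.mul ((hmL.pow_const 2).add
      ((measurable_alphf' ν).mul (hmLd.pow_const 2)))).ennreal_ofReal
  have hmgrad : Measurable fun k : ℝ => gradSq k (ω k) (dω k) := by
    unfold gradSq
    exact ((measurable_id.pow_const 2).mul (hmL.pow_const 2)).add (hmLd.pow_const 2)
  have hmB : Measurable fun k : ℝ =>
      ENNReal.ofReal (Wf ν m ε c t k * (ν * gradSq k (ω k) (dω k))) :=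
    (hmW.mul (measurable_const.mul hmgrad)).ennreal_ofReal
  have hmC : Measurable fun k : ℝ =>
      ENNReal.ofReal (Wf ν m ε c t k * (lamf ν k * (L2y (ω k)) ^ 2)) :=
    (hmW.mul ((measurable_lamf' ν).mul (hmL.pow_const 2))).ennreal_ofReal
  have hpt : ∀ k ∈ {k : ℝ | ν ≤ |k|},
      ENNReal.ofReal (Wf ν m ε c t k * (|k| ^ ((2 : ℝ) / 3) * (L2y (ω k)) ^ 2)) ≤
      ENNReal.ofReal (ν ^ (-(1 : ℝ) / 3)) *
        ((ENNReal.ofReal (Wf ν m ε c t k *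
            ((L2y (ω k)) ^ 2 + alphf ν k * (L2y (dω k)) ^ 2))) ^ ((1 : ℝ) / 2) *
          ((ENNReal.ofReal (Wf ν m ε c t k *
              (ν * gradSq k (ω k) (dω k)))) ^ ((1 : ℝ) / 4) *
           (ENNReal.ofReal (Wf ν m ε c t k *
              (lamf ν k * (L2y (ω k)) ^ 2))) ^ ((1 : ℝ) / 4))) := by
    intro k hk
    have hk' : ν ≤ |k| := hk
    have hk0 : 0 < |k| := lt_of_lt_of_le hν0 hk'
    have hW := Wf_nonneg ν m ε c t k
    have hb0 : (0 : ℝ) ≤ |k| ^ ((2 : ℝ) / 3) := Real.rpow_nonneg (abs_nonneg k) _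
    have ha3 : (0 : ℝ) ≤ ν ^ ((1 : ℝ) / 3) := Real.rpow_nonneg hν0.le _
    have hr0 : (0 : ℝ) ≤ ν ^ (-(1 : ℝ) / 3) := Real.rpow_nonneg hν0.le _
    have hlam : lamf ν k = ν ^ ((1 : ℝ) / 3) * |k| ^ ((2 : ℝ) / 3) := if_pos hk'
    have hgradnn : 0 ≤ gradSq k (ω k) (dω k) := by unfold gradSq; positivity
    apply ofReal_bound
      (mul_nonneg hW (mul_nonneg hb0 (sq_nonneg _)))
      (mul_nonneg hW (add_nonneg (sq_nonneg _)
        (mul_nonneg (alphf_nonneg hν0.le k) (sq_nonneg _))))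
      (mul_nonneg hW (mul_nonneg hν0.le hgradnn))
      (mul_nonneg hW (mul_nonneg (lamf_nonneg hν0.le k) (sq_nonneg _)))
      hr0
    rw [hlam]
    have eν : (ν ^ (-(1 : ℝ) / 3)) ^ 4 * ν * ν ^ ((1 : ℝ) / 3) = 1 := by
      have h4 : (ν ^ (-(1 : ℝ) / 3)) ^ (4 : ℕ) = ν ^ (-(4 : ℝ) / 3) := by
        rw [← Real.rpow_natCast (ν ^ (-(1 : ℝ) / 3)) 4, ← Real.rpow_mul hν0.le]
        norm_num
      rw [h4]
      calc ν ^ (-(4 : ℝ) / 3) * ν * ν ^ ((1 : ℝ) / 3)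
          = ν ^ (-(4 : ℝ) / 3) * ν ^ (1 : ℝ) * ν ^ ((1 : ℝ) / 3) := by rw [Real.rpow_one]
        _ = ν ^ (-(4 : ℝ) / 3 + 1 + (1 : ℝ) / 3) := by
            rw [← Real.rpow_add hν0, ← Real.rpow_add hν0]
        _ = 1 := by norm_num
    have ek : (|k| ^ ((2 : ℝ) / 3)) ^ (4 : ℕ) = k ^ 2 * |k| ^ ((2 : ℝ) / 3) := by
      have h1 : (|k| ^ ((2 : ℝ) / 3)) ^ (4 : ℕ) = |k| ^ ((2 : ℝ) / 3 * ((4 : ℕ) : ℝ)) := by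
        rw [← Real.rpow_natCast (|k| ^ ((2 : ℝ) / 3)) 4, ← Real.rpow_mul (abs_nonneg k)]
      have h2 : |k| ^ ((2 : ℝ) / 3 * ((4 : ℕ) : ℝ)) = |k| ^ (2 : ℕ) * |k| ^ ((2 : ℝ) / 3) := by
        rw [← Real.rpow_natCast |k| 2, ← Real.rpow_add hk0]
        norm_num
      rw [h1, h2, sq_abs]
    exact alg_key hW (alphf_nonneg hν0.le k) hν0.le hb0 ha3 (sq_nonneg k)
      (by unfold gradSq; exact le_add_of_nonneg_right (sq_nonneg _)) eν ek
  calc ∫⁻ k in {k : ℝ | ν ≤ |k|},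
        ENNReal.ofReal (Wf ν m ε c t k * (|k| ^ ((2 : ℝ) / 3) * (L2y (ω k)) ^ 2))
      ≤ ∫⁻ k in {k : ℝ | ν ≤ |k|}, ENNReal.ofReal (ν ^ (-(1 : ℝ) / 3)) *
          ((ENNReal.ofReal (Wf ν m ε c t k *
              ((L2y (ω k)) ^ 2 + alphf ν k * (L2y (dω k)) ^ 2))) ^ ((1 : ℝ) / 2) *
            ((ENNReal.ofReal (Wf ν m ε c t k *
                (ν * gradSq k (ω k) (dω k)))) ^ ((1 : ℝ) / 4) *
             (ENNReal.ofReal (Wf ν m ε c t k *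
                (lamf ν k * (L2y (ω k)) ^ 2))) ^ ((1 : ℝ) / 4))) :=
        setLIntegral_mono' (measurableSet_nuabs ν) hpt
    _ ≤ ∫⁻ k : ℝ, ENNReal.ofReal (ν ^ (-(1 : ℝ) / 3)) *
          ((ENNReal.ofReal (Wf ν m ε c t k *
              ((L2y (ω k)) ^ 2 + alphf ν k * (L2y (dω k)) ^ 2))) ^ ((1 : ℝ) / 2) *
            ((ENNReal.ofReal (Wf ν m ε c t k *
                (ν * gradSq k (ω k) (dω k)))) ^ ((1 : ℝ) / 4) *
             (ENNReal.ofReal (Wf ν m ε c t k *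
                (lamf ν k * (L2y (ω k)) ^ 2))) ^ ((1 : ℝ) / 4))) :=
        setLIntegral_le_lintegral _ _
    _ = ENNReal.ofReal (ν ^ (-(1 : ℝ) / 3)) * ∫⁻ k : ℝ,
          ((ENNReal.ofReal (Wf ν m ε c t k *
              ((L2y (ω k)) ^ 2 + alphf ν k * (L2y (dω k)) ^ 2))) ^ ((1 : ℝ) / 2) *
            ((ENNReal.ofReal (Wf ν m ε c t k *
                (ν * gradSq k (ω k) (dω k)))) ^ ((1 : ℝ) / 4) *
             (ENNReal.ofReal (Wf ν m ε c t k *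
                (lamf ν k * (L2y (ω k)) ^ 2))) ^ ((1 : ℝ) / 4))) :=
        lintegral_const_mul' _ _ ENNReal.ofReal_ne_top
    _ ≤ ENNReal.ofReal (ν ^ (-(1 : ℝ) / 3)) *
          ((∫⁻ k : ℝ, ENNReal.ofReal (Wf ν m ε c t k *
              ((L2y (ω k)) ^ 2 + alphf ν k * (L2y (dω k)) ^ 2))) ^ ((1 : ℝ) / 2) *
            ((∫⁻ k : ℝ, ENNReal.ofReal (Wf ν m ε c t k *
                (ν * gradSq k (ω k) (dω k)))) ^ ((1 : ℝ) / 4) *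
             (∫⁻ k : ℝ, ENNReal.ofReal (Wf ν m ε c t k *
                (lamf ν k * (L2y (ω k)) ^ 2))) ^ ((1 : ℝ) / 4))) :=
        mul_le_mul_right (holder3 _ _ _ hmA hmB hmC) _
    _ = ENNReal.ofReal (1 * ν ^ (-(1 : ℝ) / 3)) * (EEn ν m ε c t ω dω) ^ ((1 : ℝ) / 2) *
          (D1n ν m ε c t ω dω) ^ ((1 : ℝ) / 4) * (D3n ν m ε c t ω) ^ ((1 : ℝ) / 4) := by
        have h1 : EEn ν m ε c t ω dω = ∫⁻ k : ℝ, ENNReal.ofReal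
            (Wf ν m ε c t k * ((L2y (ω k)) ^ 2 + alphf ν k * (L2y (dω k)) ^ 2)) := rfl
        have h2 : D1n ν m ε c t ω dω = ∫⁻ k : ℝ, ENNReal.ofReal
            (Wf ν m ε c t k * (ν * gradSq k (ω k) (dω k))) := rfl
        have h3 : D3n ν m ε c t ω = ∫⁻ k : ℝ, ENNReal.ofReal
            (Wf ν m ε c t k * (lamf ν k * (L2y (ω k)) ^ 2)) := rfl
        rw [h1, h2, h3, one_mul]
        ring

end
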